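/- Let η ∈ ℝ³ with η ≠ 0, let v ∈ ℝ³, and let m be a natural number. Then (v·∇)^{2m+1} applied to x ↦ |x|^{2m+1}, evaluated at η, equals [(2m+1)!!]^2 · Σ_{l=0}^{m} (-1)^l · binom(m, l) · (|v|²)^{m-l} · (v·η̂)^{2l+1} / (2l+1), where η̂ = η/|η|. -/

import Mathlib

open RealInnerProductSpace

section Helpers

variable {E : Type*} [NormedAddCommGroup E] [InnerProductSpace ℝ E]

theorem hasFDerivAt_norm' (x : E) (hx : x ≠ 0) :
    HasFDerivAt (fun y : E => ‖y‖) (‖x‖⁻¹ • innerSL ℝ x) x := by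
  have h1 : HasFDerivAt (fun y : E => ‖y‖ ^ 2) (2 • (innerSL ℝ x)) x := by
    simpa using (hasFDerivAt_id x).norm_sq
  have hx2 : (‖x‖ ^ 2 : ℝ) ≠ 0 := by
    have : ‖x‖ ≠ 0 := norm_ne_zero_iff.mpr hx
    positivity
  have h2 := (Real.hasDerivAt_sqrt hx2).comp_hasFDerivAt x h1
  have heq : ((fun t => Real.sqrt t) ∘ fun y : E => ‖y‖ ^ 2) = fun y : E => ‖y‖ := by
    ext y; simp [Function.comp, Real.sqrt_sq (norm_nonneg y)]
  rw [heq] at h2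
  convert h2 using 1
  · rfl
  · rfl
  rw [Real.sqrt_sq (norm_nonneg x)]
  ext w
  simp [smul_smul]
  ring

theorem term_hasFDerivAt (v x : E) (hx : x ≠ 0) (A : ℕ) (B : ℤ) (C : ℝ) :
    HasFDerivAt (fun y : E => C * (⟪v, y⟫ ^ A * ‖y‖ ^ B))
      ((C * A * ⟪v, x⟫ ^ (A - 1) * ‖x‖ ^ B) • innerSL ℝ v
        + (C * B * ⟪v, x⟫ ^ A * ‖x‖ ^ (B - 2)) • innerSL ℝ x) x := by
  have hnx : ‖x‖ ≠ 0 := norm_ne_zero_iff.mpr hx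
  have hu : HasFDerivAt (fun y : E => ⟪v, y⟫) (innerSL ℝ v) x :=
    (innerSL ℝ v).hasFDerivAt
  have hup := (hasDerivAt_pow A ⟪v, x⟫).comp_hasFDerivAt x hu
  have hz := (hasDerivAt_zpow B ‖x‖ (Or.inl hnx)).comp_hasFDerivAt x (hasFDerivAt_norm' x hx)
  have h := ((hup.mul hz).const_mul C)
  convert h using 1
  · rfl
  · rfl
  · rfl
  ext w
  simp [smul_smul]
  have h2 : ‖x‖ ^ (B - 2) = ‖x‖ ^ (B - 1) * ‖x‖⁻¹ := by
    rw [← zpow_neg_one ‖x‖, ← zpow_add₀ hnx]; ring_nf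
  rw [h2]
  ring

end Helpers

/-- Coefficients in the expansion of `(v·∇)^k ‖x‖^(2m+1)`. -/
noncomputable def cc (m k j : ℕ) : ℝ :=
  if k ≤ 2*j ∧ j ≤ k then
    (∏ i ∈ Finset.range j, ((2*m+1 : ℝ) - 2*i)) * (Nat.factorial k) /
      ((Nat.factorial (2*j-k)) * 2^(k-j) * (Nat.factorial (k-j)))
  else 0

lemma cc_zero_of_lt {m k j : ℕ} (h : 2*j < k) : cc m k j = 0 := by
  rw [cc, if_neg]; omega

lemma cc_zero_of_gt {m k j : ℕ} (h : k < j) : cc m k j = 0 := by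
  rw [cc, if_neg]; omega

lemma cc_rec (m k j : ℕ) :
    cc m (k+1) (j+1) = ((2*(j+1) - k : ℕ) : ℝ) * cc m k (j+1)
      + ((2*(m:ℝ)+1) - 2*(j:ℝ)) * cc m k j := by
  unfold cc
  split_ifs with h1 h2 h3 h3 h2 h3 h3
  · obtain ⟨c, e, hj, hk⟩ : ∃ c e, j = c + 1 + e ∧ k = 2*c + 2 + e :=
      ⟨k - j - 1, 2*j - k, by omega, by omega⟩
    subst hj hk
    rw [Finset.prod_range_succ]
    rw [show 2*(c+1+e+1) - (2*c+2+e+1) = e+1 from by omega,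
        show (2*c+2+e+1) - (c+1+e+1) = c+1 from by omega,
        show 2*(c+1+e+1) - (2*c+2+e) = e+2 from by omega,
        show (2*c+2+e) - (c+1+e+1) = c from by omega,
        show 2*(c+1+e) - (2*c+2+e) = e from by omega,
        show (2*c+2+e) - (c+1+e) = c+1 from by omega]
    rw [Nat.factorial_succ (2*c+2+e), Nat.factorial_succ (e+1), Nat.factorial_succ e,
        Nat.factorial_succ c, pow_succ]
    have f1 : (Nat.factorial e : ℝ) ≠ 0 := Nat.cast_ne_zero.mpr (Nat.factorial_ne_zero e)
    have f2 : (Nat.factorial c : ℝ) ≠ 0 := Nat.cast_ne_zero.mpr (Nat.factorial_ne_zero c)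
    have f3 : (2:ℝ)^c ≠ 0 := by positivity
    push_cast
    field_simp
    ring
  · obtain ⟨rfl⟩ : k = 2*j+1 := by omega
    rw [show 2*(j+1) - (2*j+1+1) = 0 from by omega,
        show (2*j+1+1) - (j+1) = j+1 from by omega,
        show 2*(j+1) - (2*j+1) = 1 from by omega,
        show (2*j+1) - (j+1) = j from by omega]
    rw [Nat.factorial_succ (2*j+1), Nat.factorial_succ j, pow_succ]
    have f2 : (Nat.factorial j : ℝ) ≠ 0 := Nat.cast_ne_zero.mpr (Nat.factorial_ne_zero j)
    have f3 : (2:ℝ)^j ≠ 0 := by positivity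
    push_cast
    field_simp
    ring
  · obtain ⟨rfl⟩ : j = k := by omega
    rw [Finset.prod_range_succ]
    rw [show 2*(k+1) - (k+1) = k+1 from by omega,
        show (k+1) - (k+1) = 0 from by omega,
        show 2*k - k = k from by omega, show k - k = 0 from by omega]
    have f1 : (Nat.factorial (k+1) : ℝ) ≠ 0 := Nat.cast_ne_zero.mpr (Nat.factorial_ne_zero _)
    have f2 : (Nat.factorial k : ℝ) ≠ 0 := Nat.cast_ne_zero.mpr (Nat.factorial_ne_zero k)
    simp only [Nat.factorial, Nat.cast_one, mul_zero, zero_add, pow_zero, Nat.cast_ofNat]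
    field_simp
  · exfalso; omega
  · exfalso; omega
  · rw [show 2*(j+1) - k = 0 from by omega]
    push_cast
    ring
  · exfalso; omega
  · ring

lemma prod_odd (l : ℕ) :
    ∏ i ∈ Finset.range (l+1), (2*(i:ℝ)+1) = ((2*l+1).doubleFactorial : ℝ) := by
  induction l with
  | zero => simp
  | succ n ih =>
    rw [Finset.prod_range_succ, ih, show 2*(n+1)+1 = (2*n+1)+2 from by ring,
      Nat.doubleFactorial_add_two]
    push_cast
    ring

lemma prod_desc (n : ℕ) :
    ∏ i ∈ Finset.range (n+1), ((2*(n:ℝ)+1) - 2*i) = ((2*n+1).doubleFactorial : ℝ) := by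
  have h := Finset.prod_range_reflect (fun i => (2*(i:ℝ)+1)) (n+1)
  rw [← prod_odd n, ← h]
  refine Finset.prod_congr rfl fun i hi => ?_
  simp only [Finset.mem_range] at hi
  have : n + 1 - 1 - i = n - i := by omega
  rw [this]
  have h2 : (( n - i : ℕ) : ℝ) = (n : ℝ) - i := by
    rw [Nat.cast_sub (by omega)]
  rw [h2]; ring

lemma cc_final (m l : ℕ) (hl : l ≤ m) :
    cc m (2*m+1) (m+1+l) =
      ((2*m+1).doubleFactorial : ℝ)^2 * ((-1)^l * (m.choose l) / (2*(l:ℝ)+1)) := by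
  obtain ⟨e, rfl⟩ : ∃ e, m = l + e := ⟨m - l, by omega⟩
  rw [cc, if_pos (by constructor <;> omega)]
  rw [show 2*((l+e)+1+l) - (2*(l+e)+1) = 2*l+1 from by omega,
      show (2*(l+e)+1) - ((l+e)+1+l) = e from by omega]
  rw [show (l+e)+1+l = ((l+e)+1) + l from by omega, Finset.prod_range_add]
  have hA : ∏ i ∈ Finset.range ((l+e)+1), ((2*((l+e):ℕ)+1 : ℝ) - 2*i)
      = ((2*(l+e)+1).doubleFactorial : ℝ) := by
    rw [← prod_desc (l+e)]
  have hB : ∏ i ∈ Finset.range l, ((2*((l+e):ℕ)+1 : ℝ) - 2*(((l+e)+1+i : ℕ) : ℝ))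
      = (-1)^l * ∏ i ∈ Finset.range l, (2*(i:ℝ)+1) := by
    have : ∀ i ∈ Finset.range l, (2*(((l+e):ℕ):ℝ)+1 - 2*(((l+e)+1+i : ℕ) : ℝ))
        = (-1) * (2*(i:ℝ)+1) := fun i _ => by push_cast; ring
    rw [Finset.prod_congr rfl this, Finset.prod_mul_distrib, Finset.prod_const,
      Finset.card_range]
  have hC : (2*(l:ℝ)+1) * ∏ i ∈ Finset.range l, (2*(i:ℝ)+1)
      = ((2*l+1).doubleFactorial : ℝ) := by
    rw [← prod_odd l, Finset.prod_range_succ]; ring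
  have hfm : (((2*(l+e)+1).factorial : ℕ) : ℝ)
      = ((2*(l+e)+1).doubleFactorial : ℝ) * 2^(l+e) * ((l+e).factorial : ℝ) := by
    have h1 := Nat.factorial_eq_mul_doubleFactorial (2*(l+e))
    rw [Nat.doubleFactorial_two_mul] at h1
    push_cast [h1]; ring
  have hfl : (((2*l+1).factorial : ℕ) : ℝ)
      = ((2*l+1).doubleFactorial : ℝ) * 2^l * (l.factorial : ℝ) := by
    have h1 := Nat.factorial_eq_mul_doubleFactorial (2*l)
    rw [Nat.doubleFactorial_two_mul] at h1
    push_cast [h1]; ring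
  have hch : (((l+e).choose l : ℕ) : ℝ) * (l.factorial : ℝ) * (e.factorial : ℝ)
      = ((l+e).factorial : ℝ) := by
    have := Nat.choose_mul_factorial_mul_factorial (show l ≤ l + e by omega)
    rw [show l + e - l = e from by omega] at this
    push_cast [← this]; ring
  have hprodpos : (0:ℝ) < ∏ i ∈ Finset.range l, (2*(i:ℝ)+1) :=
    Finset.prod_pos fun i _ => by positivity
  have n1 : (((l+e).factorial : ℕ) : ℝ) ≠ 0 := Nat.cast_ne_zero.mpr (Nat.factorial_ne_zero _)
  have n2 : ((l.factorial : ℕ) : ℝ) ≠ 0 := Nat.cast_ne_zero.mpr (Nat.factorial_ne_zero _)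
  have n3 : ((e.factorial : ℕ) : ℝ) ≠ 0 := Nat.cast_ne_zero.mpr (Nat.factorial_ne_zero _)
  have n4 : (2:ℝ)^l ≠ 0 := by positivity
  have n5 : (2:ℝ)^e ≠ 0 := by positivity
  have n6 : (2*(l:ℝ)+1) ≠ 0 := by positivity
  have n7 : ((2*l+1).factorial : ℝ) ≠ 0 := Nat.cast_ne_zero.mpr (Nat.factorial_ne_zero _)
  rw [hA, hB]
  rw [show ((2*(l+e)+1).doubleFactorial : ℝ) * ((-1)^l * ∏ i ∈ Finset.range l, (2*(i:ℝ)+1))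
        * ((2*(l+e)+1).factorial : ℝ)
      = ((2*(l+e)+1).doubleFactorial : ℝ) * ((-1)^l * ∏ i ∈ Finset.range l, (2*(i:ℝ)+1))
        * (((2*(l+e)+1).doubleFactorial : ℝ) * 2^(l+e) * ((l+e).factorial : ℝ)) from by rw [← hfm]]
  rw [← hch, ← hC] at *
  rw [hfl]
  have h2le : (2:ℝ)^(l+e) = 2^l * 2^e := pow_add 2 l e
  rw [h2le]
  field_simp

lemma sum_step (m k : ℕ) (u r w : ℝ) :
    (∑ j ∈ Finset.range (k+1),
       (cc m k j * w^(2*(k-j)) * (((2*j-k : ℕ):ℝ) * u^(2*j-k-1) * r^(2*(m:ℤ)+1-2*(j:ℤ))) * w^2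
        + cc m k j * w^(2*(k-j)) *
            (((2*(m:ℤ)+1-2*(j:ℤ) : ℤ):ℝ) * u^(2*j-k) * r^(2*(m:ℤ)+1-2*(j:ℤ)-2)) * u))
     = ∑ j ∈ Finset.range (k+1+1),
         cc m (k+1) j * w^(2*(k+1-j)) * (u^(2*j-(k+1)) * r^(2*(m:ℤ)+1-2*(j:ℤ))) := by
  rw [Finset.sum_add_distrib]
  rw [Finset.sum_range_succ'
    (fun j => cc m (k+1) j * w^(2*(k+1-j)) * (u^(2*j-(k+1)) * r^(2*(m:ℤ)+1-2*(j:ℤ)))) (k+1)]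
  have hT0 : cc m (k+1) 0 * w^(2*(k+1-0)) * (u^(2*0-(k+1)) * r^(2*(m:ℤ)+1-2*((0:ℕ):ℤ))) = 0 := by
    rw [cc_zero_of_lt (by omega)]; ring
  rw [hT0, add_zero]
  have hexp : ∀ j ∈ Finset.range (k+1),
      cc m (k+1) (j+1) * w^(2*(k+1-(j+1))) * (u^(2*(j+1)-(k+1)) * r^(2*(m:ℤ)+1-2*((j+1:ℕ):ℤ)))
      = (((2*(j+1) - k : ℕ):ℝ) * cc m k (j+1) * w^(2*(k+1-(j+1)))
            * (u^(2*(j+1)-(k+1)) * r^(2*(m:ℤ)+1-2*((j+1:ℕ):ℤ))))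
        + (((2*(m:ℝ)+1) - 2*(j:ℝ)) * cc m k j * w^(2*(k+1-(j+1)))
            * (u^(2*(j+1)-(k+1)) * r^(2*(m:ℤ)+1-2*((j+1:ℕ):ℤ)))) := by
    intro j _
    rw [cc_rec]; ring
  rw [Finset.sum_congr rfl hexp, Finset.sum_add_distrib]
  congr 1
  · rw [Finset.sum_range_succ'
      (fun j => cc m k j * w^(2*(k-j)) * (((2*j-k : ℕ):ℝ) * u^(2*j-k-1) * r^(2*(m:ℤ)+1-2*(j:ℤ))) * w^2) k]
    rw [Finset.sum_range_succ
      (fun j => ((2*(j+1) - k : ℕ):ℝ) * cc m k (j+1) * w^(2*(k+1-(j+1)))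
            * (u^(2*(j+1)-(k+1)) * r^(2*(m:ℤ)+1-2*((j+1:ℕ):ℤ)))) k]
    have hA0 : cc m k 0 * w^(2*(k-0)) * (((2*0-k : ℕ):ℝ) * u^(2*0-k-1) * r^(2*(m:ℤ)+1-2*((0:ℕ):ℤ))) * w^2 = 0 := by
      rw [show 2*0-k = 0 from by omega]; push_cast; ring
    have hAk : ((2*(k+1) - k : ℕ):ℝ) * cc m k (k+1) * w^(2*(k+1-(k+1)))
            * (u^(2*(k+1)-(k+1)) * r^(2*(m:ℤ)+1-2*((k+1:ℕ):ℤ))) = 0 := by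
      rw [cc_zero_of_gt (by omega)]; ring
    rw [hA0, hAk, add_zero, add_zero]
    refine Finset.sum_congr rfl fun j hj => ?_
    simp only [Finset.mem_range] at hj
    rw [show 2*(j+1)-k-1 = 2*(j+1)-(k+1) from by omega]
    conv_rhs => rw [show 2*(k+1-(j+1)) = 2*(k-(j+1)) + 2 from by omega]
    rw [pow_add]
    ring
  · refine Finset.sum_congr rfl fun j hj => ?_
    simp only [Finset.mem_range] at hj
    have hre : (2*(m:ℤ)+1-2*((j+1:ℕ):ℤ)) = 2*(m:ℤ)+1-2*(j:ℤ)-2 := by push_cast; ring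
    rw [hre, show 2*(k+1-(j+1)) = 2*(k-j) from by omega]
    by_cases hk : k ≤ 2*j
    · rw [show 2*(j+1)-(k+1) = (2*j-k)+1 from by omega, pow_succ]
      push_cast [Int.cast_sub]
      ring
    · rw [cc_zero_of_lt (show 2*j < k from by omega)]
      ring

/-- The directional derivative operator `(v·∇)` acting on real functions on `ℝ³`. -/
noncomputable def dirDeriv (v : EuclideanSpace ℝ (Fin 3))
    (f : EuclideanSpace ℝ (Fin 3) → ℝ) : EuclideanSpace ℝ (Fin 3) → ℝ :=
  fun x => fderiv ℝ f x v

/-- The explicit form of `(v·∇)^k ‖x‖^(2m+1)`. -/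
noncomputable def GG (m : ℕ) (v : EuclideanSpace ℝ (Fin 3)) (k : ℕ)
    (x : EuclideanSpace ℝ (Fin 3)) : ℝ :=
  ∑ j ∈ Finset.range (k+1),
    (cc m k j * ‖v‖^(2*(k-j))) * (⟪v,x⟫^(2*j-k) * ‖x‖^(2*(m:ℤ)+1-2*(j:ℤ)))

lemma GG_hasFDerivAt (m : ℕ) (v x : EuclideanSpace ℝ (Fin 3)) (hx : x ≠ 0) (k : ℕ) :
    HasFDerivAt (GG m v k)
      (∑ j ∈ Finset.range (k+1),
        (((cc m k j * ‖v‖^(2*(k-j))) * ((2*j-k : ℕ):ℝ) * ⟪v,x⟫^(2*j-k-1)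
            * ‖x‖^(2*(m:ℤ)+1-2*(j:ℤ))) • innerSL ℝ v
          + ((cc m k j * ‖v‖^(2*(k-j))) * ((2*(m:ℤ)+1-2*(j:ℤ) : ℤ):ℝ) * ⟪v,x⟫^(2*j-k)
            * ‖x‖^(2*(m:ℤ)+1-2*(j:ℤ)-2)) • innerSL ℝ x)) x :=
  HasFDerivAt.fun_sum fun j _ => term_hasFDerivAt v x hx _ _ _

lemma iter_eq (m : ℕ) (v : EuclideanSpace ℝ (Fin 3)) (k : ℕ) :
    ∀ x : EuclideanSpace ℝ (Fin 3), x ≠ 0 →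
    ((dirDeriv v)^[k] (fun x => ‖x‖^(2*m+1))) x = GG m v k x := by
  induction k with
  | zero =>
    intro x hx
    simp only [Function.iterate_zero, id_eq, GG, zero_add, Finset.sum_range_one]
    rw [show cc m 0 0 = 1 from by simp [cc]]
    rw [show (2*(m:ℤ)+1-2*(((0:ℕ)):ℤ)) = ((2*m+1 : ℕ) : ℤ) from by push_cast; ring, zpow_natCast]
    simp
  | succ k ih =>
    intro x hx
    rw [Function.iterate_succ_apply']
    have hev : ((dirDeriv v)^[k] (fun x => ‖x‖^(2*m+1))) =ᶠ[nhds x] GG m v k := by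
      filter_upwards [IsOpen.mem_nhds isOpen_compl_singleton hx] with y hy
      exact ih y hy
    show fderiv ℝ ((dirDeriv v)^[k] (fun x => ‖x‖^(2*m+1))) x v = _
    rw [hev.fderiv_eq, (GG_hasFDerivAt m v x hx k).fderiv]
    rw [ContinuousLinearMap.sum_apply]
    simp only [ContinuousLinearMap.add_apply, ContinuousLinearMap.coe_smul',
      Pi.smul_apply, innerSL_apply_apply, smul_eq_mul]
    rw [show GG m v (k+1) x = ∑ j ∈ Finset.range (k+1+1),
         cc m (k+1) j * ‖v‖^(2*(k+1-j)) * (⟪v,x⟫^(2*j-(k+1)) * ‖x‖^(2*(m:ℤ)+1-2*(j:ℤ))) from rfl]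
    rw [← sum_step m k ⟪v,x⟫ ‖x‖ ‖v‖]
    refine Finset.sum_congr rfl fun j hj => ?_
    rw [real_inner_self_eq_norm_sq v, real_inner_comm x v]
    ring

theorem iterated_dirDeriv_odd_norm_pow (η v : EuclideanSpace ℝ (Fin 3)) (hη : η ≠ 0)
    (m : ℕ) :
    ((dirDeriv v)^[2 * m + 1] (fun x => ‖x‖ ^ (2 * m + 1))) η =
      ((Nat.doubleFactorial (2 * m + 1) : ℝ)) ^ 2 *
        ∑ l ∈ Finset.range (m + 1),
          (-1 : ℝ) ^ l * (Nat.choose m l : ℝ) * (‖v‖ ^ 2) ^ (m - l) *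
            ⟪v, ‖η‖⁻¹ • η⟫ ^ (2 * l + 1) / (2 * (l : ℝ) + 1) := by
  rw [iter_eq m v (2*m+1) η hη, GG]
  have hnη : ‖η‖ ≠ 0 := norm_ne_zero_iff.mpr hη
  have hsub : Finset.Ico (m+1) (2*m+1+1) ⊆ Finset.range (2*m+1+1) := by
    intro j hj
    simp only [Finset.mem_Ico] at hj
    simp only [Finset.mem_range]
    omega
  rw [← Finset.sum_subset hsub (by
    intro j hj hj2
    simp only [Finset.mem_range] at hj
    simp only [Finset.mem_Ico, not_and, not_le] at hj2
    have : j < m + 1 := by by_contra h; exact absurd (hj2 (by omega)) (by omega)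
    rw [cc_zero_of_lt (show 2*j < 2*m+1 from by omega)]
    ring)]
  rw [Finset.sum_Ico_eq_sum_range]
  rw [show 2*m+1+1 - (m+1) = m+1 from by omega]
  rw [Finset.mul_sum]
  refine Finset.sum_congr rfl fun l hl => ?_
  simp only [Finset.mem_range] at hl
  rw [cc_final m l (by omega)]
  rw [show (2*m+1) - (m+1+l) = m - l from by omega,
      show 2*(m+1+l) - (2*m+1) = 2*l+1 from by omega]
  rw [show (2*(m:ℤ)+1-2*((m+1+l : ℕ):ℤ)) = -((2*l+1 : ℕ) : ℤ) from by push_cast; ring]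
  rw [zpow_neg, zpow_natCast]
  rw [real_inner_smul_right, mul_pow, inv_pow, ← pow_mul ‖v‖ 2 (m-l)]
  ring
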